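/- Fix constants b ∈ ℝ, σ ∈ ℝ, μ > 0, β > 0, γ > 0, a continuous function W : [0,∞) → ℝ with W(0) = 0, and initial values X₀ ≥ 0, V₀ ≥ 0. Then there exists a triple (X, V, L) of continuous functions with X : [0,∞) → [0,∞) and L a boundary term for X at zero, such that for all t ≥ 0: X(t) = X₀ + ∫₀ᵗ [b + μV(s)] ds + σW(t) + L(t) and V(t) = V₀ − γ∫₀ᵗ V(s) ds + (β/μ)L(t). -/

import Mathlib

open MeasureTheory

noncomputable def runSup (h : ℝ → ℝ) (t : ℝ) : ℝ := sSup (h '' Set.Icc 0 t)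

variable {h h₁ h₂ : ℝ → ℝ}

lemma runSup_bdd (hc : Continuous h) (t : ℝ) : BddAbove (h '' Set.Icc 0 t) :=
  ((isCompact_Icc).image hc).bddAbove

lemma le_runSup (hc : Continuous h) {s t : ℝ} (hs : s ∈ Set.Icc 0 t) : h s ≤ runSup h t :=
  le_csSup (runSup_bdd hc t) ⟨s, hs, rfl⟩

lemma runSup_le {c t : ℝ} (ht : 0 ≤ t) (hb : ∀ s ∈ Set.Icc 0 t, h s ≤ c) : runSup h t ≤ c :=
  csSup_le ⟨h 0, 0, ⟨le_refl 0, ht⟩, rfl⟩ (by rintro x ⟨s, hs, rfl⟩; exact hb s hs)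

lemma runSup_of_neg {t : ℝ} (ht : t < 0) : runSup h t = 0 := by
  unfold runSup
  rw [Set.Icc_eq_empty (by exact fun hle => absurd (le_trans le_rfl hle) (not_le.mpr ht)),
    Set.image_empty, Real.sSup_empty]

lemma runSup_nonneg (hc : Continuous h) (h0 : h 0 = 0) (t : ℝ) : 0 ≤ runSup h t := by
  rcases lt_or_ge t 0 with ht | ht
  · rw [runSup_of_neg ht]
  · have := le_runSup hc (s := 0) (t := t) ⟨le_rfl, ht⟩
    rw [h0] at this; exact this

lemma runSup_mono (hc : Continuous h) (h0 : h 0 = 0) : Monotone (runSup h) := by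
  intro s t hst
  rcases lt_or_ge s 0 with hs | hs
  · rw [runSup_of_neg hs]
    exact runSup_nonneg hc h0 t
  · exact csSup_le_csSup (runSup_bdd hc t)
      ⟨h 0, 0, ⟨le_rfl, hs⟩, rfl⟩
      (Set.image_mono (Set.Icc_subset_Icc_right hst))

lemma runSup_continuous (hc : Continuous h) (h0 : h 0 = 0) : Continuous (runSup h) := by
  rw [continuous_iff_continuousAt]
  intro t₀
  rcases lt_or_ge t₀ 0 with ht₀ | ht₀
  · refine ContinuousAt.congr (f := fun _ => (0:ℝ)) continuousAt_const ?_
    exact Filter.eventuallyEq_of_mem (Iio_mem_nhds ht₀) fun t ht => (runSup_of_neg ht).symm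
  · rw [Metric.continuousAt_iff]
    intro ε hε
    obtain ⟨δ, hδ, hball⟩ := Metric.continuousAt_iff.mp hc.continuousAt (ε / 4) (by linarith)
    refine ⟨δ, hδ, fun {t} hdist => ?_⟩
    rw [Real.dist_eq, abs_lt] at hdist
    have hball' : ∀ u : ℝ, |u - t₀| < δ → |h u - h t₀| < ε / 4 := by
      intro u hu
      have := hball (x := u) (by rw [Real.dist_eq]; exact hu)
      rwa [Real.dist_eq] at this
    have hht₀ : h t₀ ≤ runSup h t₀ := le_runSup hc ⟨ht₀, le_rfl⟩
    have key : runSup h t ≤ runSup h t₀ + ε / 2 ∧ runSup h t₀ ≤ runSup h t + ε / 2 := by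
      rcases le_or_gt t₀ t with hle | hlt
      · constructor
        · refine runSup_le (le_trans ht₀ hle) fun s hs => ?_
          rcases le_or_gt s t₀ with hs' | hs'
          · have := le_runSup hc (t := t₀) ⟨hs.1, hs'⟩; linarith
          · have hsd : |s - t₀| < δ := by
              rw [abs_lt]
              exact ⟨by linarith, by linarith [hs.2, hdist.2]⟩
            have := hball' s hsd
            rw [abs_lt] at this
            linarith
        · have := runSup_mono hc h0 hle; linarith
      · constructor
        · have := runSup_mono hc h0 hlt.le; linarith
        · rcases lt_or_ge t 0 with htneg | htnn
          · rw [runSup_of_neg htneg]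
            have habs : ∀ s ∈ Set.Icc 0 t₀, |s - t₀| < δ := by
              intro s hs
              rw [abs_lt]
              exact ⟨by linarith [hs.1, hdist.1], by linarith [hs.2, hδ]⟩
            have hht0 := hball' 0 (habs 0 ⟨le_rfl, ht₀⟩)
            rw [h0, abs_lt] at hht0
            refine runSup_le ht₀ fun s hs => ?_
            have := hball' s (habs s hs)
            rw [abs_lt] at this
            linarith
          · refine runSup_le ht₀ fun s hs => ?_
            rcases le_or_gt s t with hs' | hs'
            · have := le_runSup hc (t := t) ⟨hs.1, hs'⟩; linarith
            · have hsd : |s - t₀| < δ := by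
                rw [abs_lt]
                exact ⟨by linarith [hs.2, hdist.1], by linarith [hs.2, hdist.1, hs.1]⟩
              have h1 := hball' s hsd
              have h2 := hball' t (by rw [abs_lt]; exact hdist)
              have h3 := le_runSup hc (t := t) ⟨htnn, le_rfl⟩
              rw [abs_lt] at h1 h2
              linarith
    rw [Real.dist_eq, abs_lt]
    exact ⟨by linarith [key.2], by linarith [key.1]⟩

lemma abs_runSup_sub_le {h₁ h₂ : ℝ → ℝ} (hc₁ : Continuous h₁) (hc₂ : Continuous h₂)
    {t ε : ℝ} (hε : 0 ≤ ε) (hd : ∀ s ∈ Set.Icc 0 t, |h₁ s - h₂ s| ≤ ε) :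
    |runSup h₁ t - runSup h₂ t| ≤ ε := by
  rcases lt_or_ge t 0 with ht | ht
  · rw [runSup_of_neg ht, runSup_of_neg ht]
    simpa using hε
  · rw [abs_sub_le_iff]
    constructor
    · rw [sub_le_iff_le_add]
      refine runSup_le ht fun s hs => ?_
      have h1 := (abs_sub_le_iff.mp (hd s hs)).1
      have h2 := le_runSup hc₂ hs
      linarith
    · rw [sub_le_iff_le_add]
      refine runSup_le ht fun s hs => ?_
      have h1 := (abs_sub_le_iff.mp (hd s hs)).2
      have h2 := le_runSup hc₁ hs
      linarith

section hw

variable (b σ μ β γ X₀ V₀ : ℝ) (W : ℝ → ℝ)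

noncomputable def hwZ (V : ℝ → ℝ) (t : ℝ) : ℝ :=
  X₀ + (∫ u in (0:ℝ)..(max t 0), (b + μ * V u)) + σ * W (max t 0)

noncomputable def hwH (V : ℝ → ℝ) (s : ℝ) : ℝ := max 0 (-(hwZ b σ μ X₀ W V s))

noncomputable def hwL (V : ℝ → ℝ) (t : ℝ) : ℝ := runSup (hwH b σ μ X₀ W V) t

noncomputable def hwPhi (V : ℝ → ℝ) (t : ℝ) : ℝ :=
  V₀ - γ * (∫ s in (0:ℝ)..(max t 0), V s) + (β / μ) * hwL b σ μ X₀ W V t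

variable {V V₁ V₂ : ℝ → ℝ} {W}

lemma maxcont : Continuous (fun t : ℝ => max t 0) := continuous_id.max continuous_const

lemma hwZ_cont (hWc : Continuous W) (hVc : Continuous V) : Continuous (hwZ b σ μ X₀ W V) := by
  unfold hwZ
  have h1 : Continuous (fun t : ℝ => ∫ u in (0:ℝ)..(max t 0), (b + μ * V u)) :=
    (intervalIntegral.continuous_primitive
      (fun a c => ((continuous_const.add (continuous_const.mul hVc)).intervalIntegrable a c)) 0).comp maxcont
  exact (continuous_const.add h1).add (continuous_const.mul (hWc.comp maxcont))

lemma hwZ_zero (hW0 : W 0 = 0) : hwZ b σ μ X₀ W V 0 = X₀ := by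
  simp [hwZ, hW0]

lemma hwH_cont (hWc : Continuous W) (hVc : Continuous V) : Continuous (hwH b σ μ X₀ W V) :=
  continuous_const.max (hwZ_cont b σ μ X₀ hWc hVc).neg

lemma hwH_zero (hW0 : W 0 = 0) (hX₀ : 0 ≤ X₀) : hwH b σ μ X₀ W V 0 = 0 := by
  simp [hwH, hwZ_zero, hW0, max_eq_left, neg_nonpos.mpr hX₀]

lemma hwL_cont (hWc : Continuous W) (hW0 : W 0 = 0) (hX₀ : 0 ≤ X₀) (hVc : Continuous V) :
    Continuous (hwL b σ μ X₀ W V) :=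
  runSup_continuous (hwH_cont b σ μ X₀ hWc hVc) (hwH_zero b σ μ X₀ hW0 hX₀)

lemma hwPhi_cont (hWc : Continuous W) (hW0 : W 0 = 0) (hX₀ : 0 ≤ X₀) (hVc : Continuous V) :
    Continuous (hwPhi b σ μ β γ X₀ V₀ W V) := by
  unfold hwPhi
  have h1 : Continuous (fun t : ℝ => ∫ s in (0:ℝ)..(max t 0), V s) :=
    (intervalIntegral.continuous_primitive (fun a c => hVc.intervalIntegrable a c) 0).comp maxcont
  exact (continuous_const.sub (continuous_const.mul h1)).add
    (continuous_const.mul (hwL_cont b σ μ X₀ hWc hW0 hX₀ hVc))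

lemma hwPhi_nonpos (hW0 : W 0 = 0) (hX₀ : 0 ≤ X₀) {t : ℝ} (ht : t ≤ 0) :
    hwPhi b σ μ β γ X₀ V₀ W V t = V₀ := by
  unfold hwPhi
  have hL : hwL b σ μ X₀ W V t = 0 := by
    rcases lt_or_eq_of_le ht with h | h
    · exact runSup_of_neg h
    · rw [h]
      unfold hwL runSup
      rw [Set.Icc_self, Set.image_singleton, csSup_singleton, hwH_zero b σ μ X₀ hW0 hX₀]
  rw [hL, max_eq_right ht]
  simp

/-- The key one-step contraction-type estimate. -/
lemma hwPhi_dist (hμ : 0 < μ) (hβ : 0 ≤ β) (hγ : 0 ≤ γ)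
    (hWc : Continuous W) (hW0 : W 0 = 0) (hX₀ : 0 ≤ X₀)
    (hV₁ : Continuous V₁) (hV₂ : Continuous V₂)
    {B : ℝ → ℝ} (hBc : Continuous B) {t : ℝ} (ht : 0 ≤ t)
    (hBnn : ∀ s ∈ Set.Icc 0 t, 0 ≤ B s)
    (hbd : ∀ s ∈ Set.Icc 0 t, |V₁ s - V₂ s| ≤ B s) :
    |hwPhi b σ μ β γ X₀ V₀ W V₁ t - hwPhi b σ μ β γ X₀ V₀ W V₂ t|
      ≤ (γ + β) * ∫ s in (0:ℝ)..t, B s := by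
  have hIB : ∀ s : ℝ, 0 ≤ s → s ≤ t → |∫ u in (0:ℝ)..s, (V₁ u - V₂ u)| ≤ ∫ u in (0:ℝ)..t, B u := by
    intro s hs hst
    have h1 : |∫ u in (0:ℝ)..s, (V₁ u - V₂ u)| ≤ ∫ u in (0:ℝ)..s, |V₁ u - V₂ u| :=
      intervalIntegral.abs_integral_le_integral_abs hs
    have h2 : (∫ u in (0:ℝ)..s, |V₁ u - V₂ u|) ≤ ∫ u in (0:ℝ)..s, B u := by
      apply intervalIntegral.integral_mono_on hs
        ((hV₁.sub hV₂).abs.intervalIntegrable 0 s) (hBc.intervalIntegrable 0 s)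
      intro x hx
      exact hbd x ⟨hx.1, le_trans hx.2 hst⟩
    have h3 : (∫ u in (0:ℝ)..s, B u) ≤ ∫ u in (0:ℝ)..t, B u := by
      rw [← intervalIntegral.integral_add_adjacent_intervals
        (hBc.intervalIntegrable 0 s) (hBc.intervalIntegrable s t)]
      have : 0 ≤ ∫ u in s..t, B u :=
        intervalIntegral.integral_nonneg hst (fun u hu => hBnn u ⟨le_trans hs hu.1, hu.2⟩)
      linarith
    linarith
  have hBint_nn : 0 ≤ ∫ u in (0:ℝ)..t, B u :=
    intervalIntegral.integral_nonneg ht hBnn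
  -- difference of the time integrals
  have hIdiff : (∫ s in (0:ℝ)..(max t 0), V₁ s) - (∫ s in (0:ℝ)..(max t 0), V₂ s)
      = ∫ s in (0:ℝ)..t, (V₁ s - V₂ s) := by
    rw [max_eq_left ht, ← intervalIntegral.integral_sub (hV₁.intervalIntegrable 0 t)
      (hV₂.intervalIntegrable 0 t)]
  -- difference of the reflection terms
  have hLdiff : |hwL b σ μ X₀ W V₁ t - hwL b σ μ X₀ W V₂ t| ≤ μ * ∫ u in (0:ℝ)..t, B u := by
    apply abs_runSup_sub_le (hwH_cont b σ μ X₀ hWc hV₁) (hwH_cont b σ μ X₀ hWc hV₂)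
      (by positivity)
    intro s hs
    have hZd : hwZ b σ μ X₀ W V₁ s - hwZ b σ μ X₀ W V₂ s
        = μ * ∫ u in (0:ℝ)..s, (V₁ u - V₂ u) := by
      have key : (∫ u in (0:ℝ)..s, (b + μ * V₁ u)) - (∫ u in (0:ℝ)..s, (b + μ * V₂ u))
          = μ * ∫ u in (0:ℝ)..s, (V₁ u - V₂ u) := by
        rw [← intervalIntegral.integral_const_mul,
          ← intervalIntegral.integral_sub (f := fun u => b + μ * V₁ u) (g := fun u => b + μ * V₂ u)
            ((continuous_const.add (continuous_const.mul hV₁)).intervalIntegrable 0 s)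
            ((continuous_const.add (continuous_const.mul hV₂)).intervalIntegrable 0 s)]
        apply intervalIntegral.integral_congr
        intro x _
        ring
      unfold hwZ
      rw [max_eq_left hs.1]
      linarith [key]
    have habsH : |hwH b σ μ X₀ W V₁ s - hwH b σ μ X₀ W V₂ s|
        ≤ |hwZ b σ μ X₀ W V₁ s - hwZ b σ μ X₀ W V₂ s| := by
      unfold hwH
      rw [max_comm 0 (-(hwZ b σ μ X₀ W V₁ s)), max_comm 0 (-(hwZ b σ μ X₀ W V₂ s))]
      have h := abs_max_sub_max_le_abs (-(hwZ b σ μ X₀ W V₁ s)) (-(hwZ b σ μ X₀ W V₂ s)) 0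
      rw [show -(hwZ b σ μ X₀ W V₁ s) - -(hwZ b σ μ X₀ W V₂ s)
          = -(hwZ b σ μ X₀ W V₁ s - hwZ b σ μ X₀ W V₂ s) from by ring, abs_neg] at h
      exact h
    rw [hZd] at habsH
    calc |hwH b σ μ X₀ W V₁ s - hwH b σ μ X₀ W V₂ s|
        ≤ |μ * ∫ u in (0:ℝ)..s, (V₁ u - V₂ u)| := habsH
      _ = μ * |∫ u in (0:ℝ)..s, (V₁ u - V₂ u)| := by
          rw [abs_mul, abs_of_pos hμ]
      _ ≤ μ * ∫ u in (0:ℝ)..t, B u := by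
          exact mul_le_mul_of_nonneg_left (hIB s hs.1 hs.2) hμ.le
  have hIabs : |(∫ s in (0:ℝ)..(max t 0), V₁ s) - (∫ s in (0:ℝ)..(max t 0), V₂ s)|
      ≤ ∫ u in (0:ℝ)..t, B u := by
    rw [hIdiff]; exact hIB t ht le_rfl
  have expand : hwPhi b σ μ β γ X₀ V₀ W V₁ t - hwPhi b σ μ β γ X₀ V₀ W V₂ t
      = -(γ * ((∫ s in (0:ℝ)..(max t 0), V₁ s) - (∫ s in (0:ℝ)..(max t 0), V₂ s)))
        + (β / μ) * (hwL b σ μ X₀ W V₁ t - hwL b σ μ X₀ W V₂ t) := by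
    unfold hwPhi; ring
  rw [expand]
  have hβμ : (0:ℝ) ≤ β / μ := by positivity
  have hstep : γ * |(∫ s in (0:ℝ)..(max t 0), V₁ s) - (∫ s in (0:ℝ)..(max t 0), V₂ s)|
      + (β / μ) * |hwL b σ μ X₀ W V₁ t - hwL b σ μ X₀ W V₂ t|
      ≤ (γ + β) * ∫ s in (0:ℝ)..t, B s := by
    have h1 := mul_le_mul_of_nonneg_left hIabs hγ
    have h2 := mul_le_mul_of_nonneg_left hLdiff hβμ
    have h3 : (β / μ) * (μ * ∫ u in (0:ℝ)..t, B u) = β * ∫ u in (0:ℝ)..t, B u := by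
      field_simp
    have h4 : (γ + β) * (∫ s in (0:ℝ)..t, B s)
        = γ * (∫ u in (0:ℝ)..t, B u) + β * ∫ u in (0:ℝ)..t, B u := by ring
    linarith
  refine le_trans (le_trans (abs_add_le _ _) ?_) hstep
  rw [abs_neg, abs_mul, abs_mul, abs_of_nonneg hγ, abs_of_nonneg hβμ]

end hw

theorem hw_fixed_point (b σ μ β γ X₀ V₀ : ℝ) (hμ : 0 < μ) (hβ : 0 < β) (hγ : 0 < γ)
    {W : ℝ → ℝ} (hWc : Continuous W) (hW0 : W 0 = 0) (hX₀ : 0 ≤ X₀) :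
    ∃ V : ℝ → ℝ, Continuous V ∧ ∀ t, V t = hwPhi b σ μ β γ X₀ V₀ W V t := by
  classical
  set K : ℝ := γ + β with hK
  have hK0 : 0 < K := by positivity
  set Φ : (ℝ → ℝ) → ℝ → ℝ := hwPhi b σ μ β γ X₀ V₀ W with hΦ
  set Vs : ℕ → ℝ → ℝ := fun n => Φ^[n] (fun _ => V₀) with hVs
  have hVs_succ : ∀ n, Vs (n + 1) = Φ (Vs n) := by
    intro n
    simp only [hVs, Function.iterate_succ_apply']
  have hVs_zero : Vs 0 = fun _ => V₀ := rfl
  have hVs_cont : ∀ n, Continuous (Vs n) := by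
    intro n
    induction n with
    | zero => exact continuous_const
    | succ n ih =>
      rw [hVs_succ]
      exact hwPhi_cont b σ μ β γ X₀ V₀ hWc hW0 hX₀ ih
  have hVs_neg : ∀ n, ∀ t : ℝ, t ≤ 0 → Vs n t = V₀ := by
    intro n
    induction n with
    | zero => intro t _; rfl
    | succ n _ =>
      intro t ht
      rw [hVs_succ]
      exact hwPhi_nonpos b σ μ β γ X₀ V₀ hW0 hX₀ ht
  -- the key exponential bound on [0, T]
  have key : ∀ T : ℝ, 0 ≤ T → ∃ C : ℝ, 0 ≤ C ∧ ∀ n, ∀ t ∈ Set.Icc (0:ℝ) T,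
      |Vs (n + 1) t - Vs n t| ≤ C * K ^ n * t ^ n / n.factorial := by
    intro T hT
    have hbddim : BddAbove ((fun t => |Vs 1 t - Vs 0 t|) '' Set.Icc 0 T) :=
      (isCompact_Icc.image (((hVs_cont 1).sub (hVs_cont 0)).abs)).bddAbove
    set C : ℝ := sSup ((fun t => |Vs 1 t - Vs 0 t|) '' Set.Icc 0 T) with hCdef
    have hC : ∀ t ∈ Set.Icc (0:ℝ) T, |Vs 1 t - Vs 0 t| ≤ C :=
      fun t ht => le_csSup hbddim ⟨t, ht, rfl⟩
    have hC0 : 0 ≤ C := le_trans (abs_nonneg _) (hC 0 ⟨le_rfl, hT⟩)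
    refine ⟨C, hC0, ?_⟩
    intro n
    induction n with
    | zero =>
      intro t ht
      simpa using hC t ht
    | succ n ih =>
      intro t ht
      rw [hVs_succ (n + 1), hVs_succ n]
      have hBc : Continuous (fun s : ℝ => C * K ^ n * s ^ n / n.factorial) :=
        (continuous_const.mul (continuous_pow n)).div_const _
      have hBnn : ∀ s ∈ Set.Icc (0:ℝ) t, 0 ≤ C * K ^ n * s ^ n / n.factorial := by
        intro s hs
        have : (0:ℝ) ≤ s ^ n := pow_nonneg hs.1 n
        positivity
      have hbd : ∀ s ∈ Set.Icc (0:ℝ) t, |Vs (n + 1) s - Vs n s| ≤ C * K ^ n * s ^ n / n.factorial :=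
        fun s hs => ih s ⟨hs.1, le_trans hs.2 ht.2⟩
      have step := hwPhi_dist b σ μ β γ X₀ V₀ hμ hβ.le hγ.le hWc hW0 hX₀
        (hVs_cont (n + 1)) (hVs_cont n) hBc ht.1 hBnn hbd
      rw [← hK, ← hΦ, hVs_succ n] at step
      have hint : (∫ s in (0:ℝ)..t, C * K ^ n * s ^ n / n.factorial)
          = (C * K ^ n / n.factorial) * (t ^ (n + 1) / (n + 1)) := by
        have hfe : (fun s : ℝ => C * K ^ n * s ^ n / ↑n.factorial)
            = fun s : ℝ => (C * K ^ n / ↑n.factorial) * s ^ n := by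
          funext s; ring
        rw [hfe, intervalIntegral.integral_const_mul, integral_pow]
        norm_num
      rw [hint] at step
      refine le_trans step (le_of_eq ?_)
      have hnf : (n.factorial : ℝ) ≠ 0 := Nat.cast_ne_zero.mpr n.factorial_ne_zero
      have hn1 : ((n:ℝ) + 1) ≠ 0 := by positivity
      rw [Nat.factorial_succ]
      push_cast
      field_simp
      ring
  -- summability and the limit function
  have habs_bound : ∀ T : ℝ, 0 ≤ T → ∃ C : ℝ, 0 ≤ C ∧ ∀ n, ∀ t ∈ Set.Icc (-1:ℝ) T,
      |Vs (n + 1) t - Vs n t| ≤ C * (K * T) ^ n / n.factorial := by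
    intro T hT
    obtain ⟨C, hC0, hC⟩ := key T hT
    refine ⟨C, hC0, fun n t ht => ?_⟩
    rcases le_or_gt t 0 with htneg | htpos
    · rw [hVs_neg (n + 1) t htneg, hVs_neg n t htneg, sub_self, abs_zero]
      positivity
    · have h1 := hC n t ⟨htpos.le, ht.2⟩
      refine le_trans h1 ?_
      rw [mul_pow, ← mul_assoc]
      gcongr
      all_goals first | positivity | exact ht.2
  -- summability of the telescoping series
  have hsummand : ∀ T : ℝ, 0 ≤ T → ∀ C : ℝ, 0 ≤ C →
      Summable (fun n : ℕ => C * (K * T) ^ n / n.factorial) := by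
    intro T _ C _
    have := (Real.summable_pow_div_factorial (K * T)).mul_left C
    simpa [mul_div_assoc] using this
  have hsum : ∀ t : ℝ, Summable (fun n : ℕ => Vs (n + 1) t - Vs n t) := by
    intro t
    set T : ℝ := max t 0 with hT
    have hT0 : 0 ≤ T := le_max_right _ _
    obtain ⟨C, hC0, hC⟩ := habs_bound T hT0
    rcases le_or_gt t 0 with htneg | htpos
    · apply summable_of_ne_finset_zero (s := ∅)
      intro n _
      rw [hVs_neg (n + 1) t htneg, hVs_neg n t htneg, sub_self]
    · apply Summable.of_norm_bounded (hsummand T hT0 C hC0)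
      intro n
      exact hC n t ⟨by linarith, le_max_left t 0⟩
  set Vlim : ℝ → ℝ := fun t => V₀ + ∑' n, (Vs (n + 1) t - Vs n t) with hVlim
  have hpartial : ∀ N : ℕ, ∀ t : ℝ, V₀ + ∑ n ∈ Finset.range N, (Vs (n + 1) t - Vs n t) = Vs N t := by
    intro N t
    rw [Finset.sum_range_sub (fun n => Vs n t)]
    simp [hVs_zero]
  -- uniform convergence on [-1, T]
  have htu : ∀ T : ℝ, 0 ≤ T →
      TendstoUniformlyOn (fun N t => Vs N t) Vlim Filter.atTop (Set.Icc (-1:ℝ) T) := by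
    intro T hT0
    obtain ⟨C, hC0, hC⟩ := habs_bound T hT0
    have hts := tendstoUniformlyOn_tsum_nat (f := fun n t => Vs (n + 1) t - Vs n t)
      (hsummand T hT0 C hC0) (fun n t ht => hC n t ht)
    rw [Metric.tendstoUniformlyOn_iff] at hts ⊢
    intro ε hε
    filter_upwards [hts ε hε] with N hN t ht
    have := hN t ht
    rw [show Vs N t = V₀ + ∑ n ∈ Finset.range N, (Vs (n + 1) t - Vs n t) from (hpartial N t).symm,
      hVlim]
    simpa [dist_add_left] using this
  -- the limit is continuous
  have hVlim_neg : ∀ t : ℝ, t ≤ 0 → Vlim t = V₀ := by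
    intro t ht
    rw [hVlim]
    have : ∀ n : ℕ, Vs (n + 1) t - Vs n t = 0 := by
      intro n
      rw [hVs_neg (n + 1) t ht, hVs_neg n t ht, sub_self]
    simp [this]
  have hVlim_cont : Continuous Vlim := by
    rw [continuous_iff_continuousAt]
    intro x
    rcases lt_or_ge x 0 with hx | hx
    · refine ContinuousAt.congr (f := fun _ => V₀) continuousAt_const ?_
      exact Filter.eventuallyEq_of_mem (Iio_mem_nhds hx) fun t ht => (hVlim_neg t (le_of_lt ht)).symm
    · have hT0 : (0:ℝ) ≤ x + 1 := by linarith
      have hco : ContinuousOn Vlim (Set.Icc (-1:ℝ) (x + 1)) := by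
        apply (htu (x + 1) hT0).continuousOn
        exact (Filter.Eventually.of_forall fun N => (hVs_cont N).continuousOn).frequently
      exact hco.continuousAt (Icc_mem_nhds (by linarith) (by linarith))
  -- pointwise convergence
  have hptw : ∀ t : ℝ, Filter.Tendsto (fun N => Vs N t) Filter.atTop (nhds (Vlim t)) := by
    intro t
    have h1 := (hsum t).hasSum.tendsto_sum_nat
    have h2 := h1.const_add V₀
    simp only [hpartial] at h2
    exact h2
  -- the fixed point property
  refine ⟨Vlim, hVlim_cont, fun t => ?_⟩
  rcases le_or_gt t 0 with ht | ht
  · rw [hVlim_neg t ht, hΦ, hwPhi_nonpos b σ μ β γ X₀ V₀ hW0 hX₀ ht]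
  · have htpos : (0:ℝ) ≤ t := ht.le
    have hub : ∀ ε : ℝ, 0 < ε → |Vlim t - Φ Vlim t| ≤ ε * (1 + K * t) := by
      intro ε hε
      have h1 := (Metric.tendstoUniformlyOn_iff.mp (htu t htpos)) ε hε
      obtain ⟨N, hN⟩ := Filter.eventually_atTop.mp h1
      have hNt : ∀ s ∈ Set.Icc (0:ℝ) t, |Vlim s - Vs N s| ≤ ε := by
        intro s hs
        have := hN N le_rfl s ⟨by linarith [hs.1], hs.2⟩
        rw [Real.dist_eq] at this
        exact this.le
      have hd2 : |Vlim t - Vs (N + 1) t| ≤ ε := by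
        have := hN (N + 1) (Nat.le_succ N) t ⟨by linarith, le_rfl⟩
        rw [Real.dist_eq] at this
        exact this.le
      have hstep := hwPhi_dist b σ μ β γ X₀ V₀ hμ hβ.le hγ.le hWc hW0 hX₀
        hVlim_cont (hVs_cont N) (B := fun _ => ε) continuous_const htpos
        (fun s _ => hε.le) hNt
      rw [← hK, ← hΦ] at hstep
      have hie : (∫ _ in (0:ℝ)..t, ε) = t * ε := by
        rw [intervalIntegral.integral_const, smul_eq_mul]
        ring
      rw [hie] at hstep
      have hΦN : Φ (Vs N) t = Vs (N + 1) t := (hVs_succ N ▸ rfl)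
      rw [hΦN] at hstep
      calc |Vlim t - Φ Vlim t|
          ≤ |Vlim t - Vs (N + 1) t| + |Vs (N + 1) t - Φ Vlim t| := abs_sub_le _ _ _
        _ ≤ ε + K * (t * ε) := by
            have : |Vs (N + 1) t - Φ Vlim t| = |Φ Vlim t - Vs (N + 1) t| := abs_sub_comm _ _
            rw [this]
            exact add_le_add hd2 hstep
        _ ≤ ε * (1 + K * t) := le_of_eq (by ring)
    by_contra hne
    set A := |Vlim t - Φ Vlim t| with hA
    have habs : 0 < A := abs_pos.mpr (sub_ne_zero.mpr hne)
    have hden : 0 < 1 + K * t := by positivity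
    have h2 := hub (A / (2 * (1 + K * t))) (by positivity)
    have h3 : A / (2 * (1 + K * t)) * (1 + K * t) = A / 2 := by
      field_simp
    rw [h3] at h2
    linarith

lemma hwL_zero (b σ μ X₀ : ℝ) {W V : ℝ → ℝ} (hW0 : W 0 = 0) (hX₀ : 0 ≤ X₀) :
    hwL b σ μ X₀ W V 0 = 0 := by
  unfold hwL runSup
  rw [Set.Icc_self, Set.image_singleton, csSup_singleton, hwH_zero b σ μ X₀ hW0 hX₀]

lemma hwL_flat (b σ μ X₀ : ℝ) {W V : ℝ → ℝ} (hWc : Continuous W) (hW0 : W 0 = 0)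
    (hX₀ : 0 ≤ X₀) (hVc : Continuous V) {a c : ℝ} (ha : 0 ≤ a) (hac : a ≤ c)
    (hpos : ∀ u ∈ Set.Icc a c, 0 < hwZ b σ μ X₀ W V u + hwL b σ μ X₀ W V u) :
    hwL b σ μ X₀ W V c = hwL b σ μ X₀ W V a := by
  have hHc := hwH_cont b σ μ X₀ (V := V) hWc hVc
  have hH0 := hwH_zero b σ μ X₀ (V := V) hW0 hX₀
  have hmono := runSup_mono hHc hH0
  refine le_antisymm ?_ (hmono hac)
  have hc0 : (0:ℝ) ≤ c := le_trans ha hac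
  obtain ⟨u, hu, hmax⟩ := isCompact_Icc.exists_isMaxOn (Set.nonempty_Icc.mpr hc0) hHc.continuousOn
  have hLc_le : hwL b σ μ X₀ W V c ≤ hwH b σ μ X₀ W V u :=
    runSup_le hc0 fun s hs => hmax hs
  rcases le_or_gt u a with hua | hua
  · exact le_trans hLc_le (le_runSup hHc ⟨hu.1, hua⟩)
  · have hXu := hpos u ⟨hua.le, hu.2⟩
    have h1 : hwH b σ μ X₀ W V u ≤ hwL b σ μ X₀ W V u := le_runSup hHc ⟨hu.1, le_rfl⟩
    have h2 : hwL b σ μ X₀ W V u ≤ hwL b σ μ X₀ W V c := hmono hu.2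
    have hLu : hwL b σ μ X₀ W V u = hwH b σ μ X₀ W V u :=
      le_antisymm (le_trans h2 hLc_le) h1
    rcases le_or_gt (-(hwZ b σ μ X₀ W V u)) 0 with hz | hz
    · have hzero : hwH b σ μ X₀ W V u = 0 := max_eq_left hz
      rw [hzero] at hLc_le
      exact le_trans hLc_le (runSup_nonneg hHc hH0 a)
    · have hH : hwH b σ μ X₀ W V u = -(hwZ b σ μ X₀ W V u) := max_eq_right hz.le
      rw [hLu, hH] at hXu
      linarith


/-- `L` is a boundary term for `X` at zero: `L(0) = 0`, `L ≥ 0` and nondecreasing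
on `[0,∞)`, and the Lebesgue–Stieltjes measure induced by `L` assigns zero mass
to the set `{t ≥ 0 : X(t) > 0}`. -/
def IsBoundaryTerm (X L : ℝ → ℝ) : Prop :=
  L 0 = 0 ∧ (∀ t : ℝ, 0 ≤ t → 0 ≤ L t) ∧ MonotoneOn L (Set.Ici 0) ∧
  ∃ S : StieltjesFunction ℝ, (∀ t : ℝ, 0 ≤ t → S t = L t) ∧
    (∀ t : ℝ, t ≤ 0 → S t = 0) ∧
    S.measure {t : ℝ | 0 ≤ t ∧ 0 < X t} = 0

/-- Existence of a solution for the near-Halfin–Whitt limit system with server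
vacations: there exists a triple `(X, V, L)` of continuous functions with
`X ≥ 0` on `[0,∞)` and `L` a boundary term for `X` at zero, such that
`X(t) = X₀ + ∫₀ᵗ [b + μV(s)] ds + σW(t) + L(t)` and
`V(t) = V₀ − γ∫₀ᵗ V(s) ds + (β/μ)L(t)` for all `t ≥ 0`. -/
theorem near_hw_limit_existence
    (b σ μ β γ : ℝ) (hμ : 0 < μ) (hβ : 0 < β) (hγ : 0 < γ)
    (W : ℝ → ℝ) (hW : ContinuousOn W (Set.Ici 0)) (hW0 : W 0 = 0)
    (X₀ V₀ : ℝ) (hX₀ : 0 ≤ X₀) (hV₀ : 0 ≤ V₀) :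
    ∃ X V L : ℝ → ℝ,
      ContinuousOn X (Set.Ici 0) ∧ ContinuousOn V (Set.Ici 0) ∧
      ContinuousOn L (Set.Ici 0) ∧
      (∀ t : ℝ, 0 ≤ t → 0 ≤ X t) ∧
      IsBoundaryTerm X L ∧
      (∀ t : ℝ, 0 ≤ t →
        X t = X₀ + (∫ s in (0:ℝ)..t, (b + μ * V s)) + σ * W t + L t) ∧
      (∀ t : ℝ, 0 ≤ t →
        V t = V₀ - γ * (∫ s in (0:ℝ)..t, V s) + (β / μ) * L t) := by
  classical
  set W' : ℝ → ℝ := fun t => W (max t 0) with hW'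
  have hW'c : Continuous W' := by
    apply hW.comp_continuous (continuous_id.max continuous_const)
    intro t
    exact le_max_right t 0
  have hW'0 : W' 0 = 0 := by simp [hW', hW0]
  obtain ⟨V, hVc, hVfix⟩ := hw_fixed_point b σ μ β γ X₀ V₀ hμ hβ hγ hW'c hW'0 hX₀
  set L : ℝ → ℝ := hwL b σ μ X₀ W' V with hLdef
  set Z : ℝ → ℝ := hwZ b σ μ X₀ W' V with hZdef
  set X : ℝ → ℝ := fun t => Z t + L t with hXdef
  have hHc := hwH_cont b σ μ X₀ (V := V) hW'c hVc
  have hH0 := hwH_zero b σ μ X₀ (V := V) hW'0 hX₀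
  have hZc : Continuous Z := hwZ_cont b σ μ X₀ hW'c hVc
  have hLc : Continuous L := runSup_continuous hHc hH0
  have hXc : Continuous X := hZc.add hLc
  have hLmono : Monotone L := runSup_mono hHc hH0
  have hL0 : L 0 = 0 := hwL_zero b σ μ X₀ hW'0 hX₀
  have hLnn : ∀ t, 0 ≤ L t := runSup_nonneg hHc hH0
  have hXnn : ∀ t : ℝ, 0 ≤ t → 0 ≤ X t := by
    intro t ht
    have h1 : hwH b σ μ X₀ W' V t ≤ L t := le_runSup hHc ⟨ht, le_rfl⟩
    have h2 : -(Z t) ≤ hwH b σ μ X₀ W' V t := le_max_right _ _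
    simp only [hXdef]
    linarith
  set S : StieltjesFunction ℝ :=
    ⟨L, hLmono, fun x => hLc.continuousAt.continuousWithinAt⟩ with hSdef
  have hSL : ∀ t : ℝ, S t = L t := fun t => rfl
  -- flatness of L on intervals where X is positive
  have hflat : ∀ a c : ℝ, 0 ≤ a → a ≤ c → (∀ u ∈ Set.Icc a c, 0 < X u) → L c = L a := by
    intro a c ha hac hpos
    exact hwL_flat b σ μ X₀ hW'c hW'0 hX₀ hVc ha hac hpos
  -- the measure condition
  have hmain : S.measure {t : ℝ | 0 ≤ t ∧ 0 < X t} = 0 := by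
    set U2 : Set ℝ := {t : ℝ | 0 < t ∧ 0 < X t} with hU2
    have hU2open : IsOpen U2 := by
      have heq : U2 = Set.Ioi 0 ∩ X ⁻¹' Set.Ioi 0 := by
        ext x
        simp [hU2, Set.mem_setOf_eq]
      rw [heq]
      exact isOpen_Ioi.inter (isOpen_Ioi.preimage hXc)
    have hcov : ∀ i : U2, ∃ p : ℝ × ℝ, (i:ℝ) ∈ Set.Ioo p.1 p.2 ∧
        S.measure (Set.Ioo p.1 p.2) = 0 := by
      rintro ⟨t, ht⟩
      obtain ⟨ε, hε, hball⟩ := Metric.isOpen_iff.mp hU2open t ht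
      have ht0 : 0 < t := ht.1
      set δ : ℝ := min ε t with hδ
      have hδ0 : 0 < δ := lt_min hε ht0
      have hδε : δ ≤ ε := min_le_left _ _
      have hδt : δ ≤ t := min_le_right _ _
      refine ⟨(t - δ/2, t + δ/2), Set.mem_Ioo.mpr ⟨by linarith, by linarith⟩, ?_⟩
      have hsub : Set.Icc (t - δ/2) (t + δ/2) ⊆ U2 := by
        intro u hu
        apply hball
        rw [Metric.mem_ball, Real.dist_eq, abs_lt]
        exact ⟨by linarith [hu.1], by linarith [hu.2]⟩
      have ha0 : 0 ≤ t - δ/2 := by linarith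
      have hLeq : L (t + δ/2) = L (t - δ/2) :=
        hflat _ _ ha0 (by linarith) (fun u hu => (hsub hu).2)
      refine le_antisymm (le_trans (measure_mono Set.Ioo_subset_Ioc_self) (le_of_eq ?_)) zero_le
      rw [S.measure_Ioc, hSL, hSL, hLeq, sub_self, ENNReal.ofReal_zero]
    choose p hp1 hp2 using hcov
    obtain ⟨T', hT'c, hT'⟩ := TopologicalSpace.isOpen_iUnion_countable
      (fun i : U2 => Set.Ioo (p i).1 (p i).2) (fun i => isOpen_Ioo)
    have hsub2 : U2 ⊆ ⋃ i ∈ T', Set.Ioo (p i).1 (p i).2 := by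
      intro x hx
      rw [hT']
      exact Set.mem_iUnion.mpr ⟨⟨x, hx⟩, hp1 ⟨x, hx⟩⟩
    have hm2 : S.measure U2 = 0 := by
      refine le_antisymm (le_trans (measure_mono hsub2) (le_of_eq ?_)) zero_le
      exact (measure_biUnion_null_iff hT'c).mpr fun i _ => hp2 i
    have hm0 : S.measure {(0:ℝ)} = 0 := by
      have hsub0 : ({(0:ℝ)} : Set ℝ) ⊆ Set.Ioc (-1:ℝ) 0 :=
        Set.singleton_subset_iff.mpr ⟨by norm_num, le_rfl⟩
      have hIoc : S.measure (Set.Ioc (-1:ℝ) 0) = 0 := by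
        rw [S.measure_Ioc, hSL, hSL, hL0]
        have h2 : L (-1:ℝ) = 0 := runSup_of_neg (by norm_num)
        rw [h2, sub_self, ENNReal.ofReal_zero]
      exact le_antisymm (le_trans (measure_mono hsub0) (le_of_eq hIoc)) zero_le
    have hsub3 : {t : ℝ | 0 ≤ t ∧ 0 < X t} ⊆ {(0:ℝ)} ∪ U2 := by
      rintro x ⟨hx0, hxX⟩
      rcases eq_or_lt_of_le hx0 with h | h
      · exact Or.inl (by simp [← h])
      · exact Or.inr ⟨h, hxX⟩
    refine le_antisymm (le_trans (measure_mono hsub3) ?_) zero_le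
    calc S.measure ({(0:ℝ)} ∪ U2) ≤ S.measure {(0:ℝ)} + S.measure U2 := measure_union_le _ _
      _ = 0 := by rw [hm0, hm2, add_zero]
  refine ⟨X, V, L, hXc.continuousOn, hVc.continuousOn, hLc.continuousOn, hXnn,
    ⟨hL0, fun t _ => hLnn t, hLmono.monotoneOn _, S, fun t _ => hSL t, ?_, hmain⟩, ?_, ?_⟩
  · intro t ht
    rcases lt_or_eq_of_le ht with h | h
    · exact runSup_of_neg h
    · rw [hSL, h, hL0]
  · intro t ht
    show Z t + L t = _
    rw [hZdef]
    unfold hwZ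
    rw [max_eq_left ht]
    have hWW : W' t = W t := by
      show W (max t 0) = W t
      rw [max_eq_left ht]
    rw [hWW]
  · intro t ht
    have := hVfix t
    rw [this]
    unfold hwPhi
    rw [max_eq_left ht, ← hLdef]
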